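/- For every k-valued Hochschild p-cochain f and q-cochain g of A, the composition operation satisfies f̂ ∘ ĝ = (f ∘ ĝ)^, where F ∘ G = Σ_{i=1}^{p} (−1)^{q(i−1)} F ∘ᵢ G and f ∘ ĝ = Σ_{i=1}^{p} (−1)^{q(i−1)} f ∘ᵢ ĝ. -/

import Mathlib

noncomputable section HochschildHopf

open scoped TensorProduct BigOperators

/-- Merging of the entries `i` and `i+1` of a `(p+1)`-tuple by multiplication,
yielding a `p`-tuple; this encodes the inner terms of the Hochschild differential. -/
def hochContract {A : Type*} [Ring A] {p : ℕ} (a : Fin (p + 1) → A) (i : Fin p) :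
    Fin p → A :=
  fun j =>
    if (j : ℕ) < (i : ℕ) then a j.castSucc
    else if j = i then a j.castSucc * a j.succ
    else a j.succ

/-- The Hochschild differential on `k`-valued `p`-cochains of a Hopf algebra `A`
(the `A`-bimodule structure on `k` is given on both sides by the counit `ε`):
`(∂f)(a⁰,…,aᵖ) = ε(a⁰)f(a¹,…,aᵖ) + Σᵢ (-1)^(i+1) f(a⁰,…,aⁱaⁱ⁺¹,…,aᵖ)
  + (-1)^(p+1) f(a⁰,…,aᵖ⁻¹)ε(aᵖ)`. -/
def hochDK {k A : Type*} [Field k] [Ring A] [HopfAlgebra k A]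
    (p : ℕ) (f : (Fin p → A) → k) : (Fin (p + 1) → A) → k :=
  fun a =>
    Coalgebra.counit (a 0) * f (Fin.tail a)
      + ∑ i : Fin p, (-1 : k) ^ ((i : ℕ) + 1) * f (hochContract a i)
      + (-1 : k) ^ (p + 1) * (f (Fin.init a) * Coalgebra.counit (a (Fin.last p)))

/-- The Hochschild differential on `A`-valued `p`-cochains of `A`:
`(∂F)(a⁰,…,aᵖ) = a⁰·F(a¹,…,aᵖ) + Σᵢ (-1)^(i+1) F(a⁰,…,aⁱaⁱ⁺¹,…,aᵖ)
  + (-1)^(p+1) F(a⁰,…,aᵖ⁻¹)·aᵖ`. -/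
def hochDA (k : Type*) {A : Type*} [Field k] [Ring A] [HopfAlgebra k A]
    (p : ℕ) (F : (Fin p → A) → A) : (Fin (p + 1) → A) → A :=
  fun a =>
    a 0 * F (Fin.tail a)
      + ∑ i : Fin p, (-1 : k) ^ ((i : ℕ) + 1) • F (hochContract a i)
      + (-1 : k) ^ (p + 1) • (F (Fin.init a) * a (Fin.last p))

/-- Cup product of `k`-valued cochains:
`(f ⌣ g)(a¹,…,a^{p+q}) = f(a¹,…,aᵖ) g(a^{p+1},…,a^{p+q})`. -/
def cupK {k A : Type*} [Field k] [Ring A] [HopfAlgebra k A]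
    (p q : ℕ) (f : (Fin p → A) → k) (g : (Fin q → A) → k) :
    (Fin (p + q) → A) → k :=
  fun a => f (fun i => a (Fin.castAdd q i)) * g (fun j => a (Fin.natAdd p j))

/-- Cup product of `A`-valued cochains. -/
def cupA {A : Type*} [Ring A]
    (p q : ℕ) (F : (Fin p → A) → A) (G : (Fin q → A) → A) :
    (Fin (p + q) → A) → A :=
  fun a => F (fun i => a (Fin.castAdd q i)) * G (fun j => a (Fin.natAdd p j))

/-- The brace operation `f ∘ᵢ G` (here `i` is 0-indexed): insert the value of the
`A`-valued `q`-cochain `G` into the `i`-th slot of the `p`-cochain `f`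
(with values in `M`), producing a `(p+q-1)`-cochain. -/
def braceIns {A M : Type*} [Ring A] (p q : ℕ) (f : (Fin p → A) → M) (i : Fin p)
    (G : (Fin q → A) → A) : (Fin (p + q - 1) → A) → M :=
  fun c => f (fun j =>
    if _h : (j : ℕ) < (i : ℕ) then
      c ⟨(j : ℕ), by have := j.isLt; have := i.isLt; omega⟩
    else if _h' : (j : ℕ) = (i : ℕ) then
      G (fun l => c ⟨(i : ℕ) + (l : ℕ), by have := i.isLt; have := l.isLt; omega⟩)
    else
      c ⟨(j : ℕ) + q - 1, by have := j.isLt; have := i.isLt; omega⟩)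

/-- The composition operation `f ∘ G = Σ_{i=1}^{p} (-1)^{q(i-1)} f ∘ᵢ G`
(with the 0-indexed convention the sign is `(-1)^{q·i}`). -/
def composeIns (k : Type*) {A M : Type*} [Field k] [Ring A] [HopfAlgebra k A]
    [AddCommMonoid M] [Module k M] (p q : ℕ) (f : (Fin p → A) → M)
    (G : (Fin q → A) → A) : (Fin (p + q - 1) → A) → M :=
  fun c => ∑ i : Fin p, (-1 : k) ^ (q * (i : ℕ)) • braceIns p q f i G c

end HochschildHopf


noncomputable section HatSection

open scoped TensorProduct

variable {k A : Type*} [Field k] [Ring A] [HopfAlgebra k A]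

set_option maxHeartbeats 1600000 in
/-- The linear map `f ↦ f̂` from `k`-valued multilinear `p`-cochains to `A`-valued
multilinear `p`-cochains of the Hopf algebra `A`, given in Sweedler notation by
`f̂(a¹,…,aᵖ) = a¹₍₁₎⋯aᵖ₍₁₎ • f(a¹₍₂₎,…,aᵖ₍₂₎)` (it is defined here by recursion on `p`,
comultiplying the first entry). -/
def hatAux : ∀ p : ℕ,
    MultilinearMap k (fun _ : Fin p => A) k →ₗ[k] MultilinearMap k (fun _ : Fin p => A) A
  | 0 =>
    { toFun := fun f => MultilinearMap.constOfIsEmpty k _ (algebraMap k A (f Fin.elim0))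
      map_add' := fun f g => by
        ext a
        simp [MultilinearMap.constOfIsEmpty]
      map_smul' := fun c f => by
        ext a
        simp [MultilinearMap.constOfIsEmpty, Algebra.smul_def] }
  | (p + 1) =>
    { toFun := fun f =>
        LinearMap.uncurryLeft
          ((TensorProduct.lift (LinearMap.mk₂ k
              (fun x y => x • (hatAux p (f.curryLeft y)))
              (fun x₁ x₂ y => add_smul x₁ x₂ _)
              (fun c x y => MultilinearMap.ext fun m => by
                simp [smul_mul_assoc])
              (fun x y₁ y₂ => MultilinearMap.ext fun m => by
                simp [map_add, mul_add])
              (fun c x y => MultilinearMap.ext fun m => by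
                simp [map_smul, mul_smul_comm]))).comp
            (Coalgebra.comul (R := k)))
      map_add' := fun f g => by
        ext a
        simp only [LinearMap.uncurryLeft_apply, LinearMap.comp_apply,
          MultilinearMap.add_apply]
        generalize Coalgebra.comul (R := k) (a 0) = t
        induction t using TensorProduct.induction_on with
        | zero => simp
        | tmul x y =>
          simp [show (f + g).curryLeft = f.curryLeft + g.curryLeft from rfl,
            smul_add, mul_add]
        | add s t hs ht =>
          simp only [map_add, MultilinearMap.add_apply] at hs ht ⊢
          rw [hs, ht]; abel
      map_smul' := fun c f => by
        ext a
        simp only [LinearMap.uncurryLeft_apply, LinearMap.comp_apply,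
          RingHom.id_apply, MultilinearMap.smul_apply]
        generalize Coalgebra.comul (R := k) (a 0) = t
        induction t using TensorProduct.induction_on with
        | zero => simp
        | tmul x y =>
          simp [show (c • f).curryLeft = c • f.curryLeft from rfl,
            mul_smul_comm]
        | add s t hs ht =>
          simp only [map_add, MultilinearMap.add_apply, smul_add] at hs ht ⊢
          rw [hs, ht] }

open Classical in
/-- `hat p f` is the `A`-valued Hochschild cochain `f̂` associated to a `k`-valued
`k`-multilinear cochain `f`, `f̂(a¹,…,aᵖ) = a¹₍₁₎⋯aᵖ₍₁₎ • f(a¹₍₂₎,…,aᵖ₍₂₎)`;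
on functions that are not multilinear it is defined to be `0`. -/
def hat (p : ℕ) (f : (Fin p → A) → k) : (Fin p → A) → A :=
  if h : ∃ g : MultilinearMap k (fun _ : Fin p => A) k, ⇑g = f then
    ⇑(hatAux p h.choose)
  else 0

end HatSection



noncomputable section HatProofs

open scoped TensorProduct
open TensorProduct

variable {k A : Type*} [Field k] [Ring A] [HopfAlgebra k A]

/-- The tuple used in `braceIns` (definitional mirror). -/
def insTuple {A : Type*} [Ring A] (p q : ℕ) (i : Fin p) (G : (Fin q → A) → A)
    (c : Fin (p + q - 1) → A) : Fin p → A :=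
  fun j =>
    if _h : (j : ℕ) < (i : ℕ) then
      c ⟨(j : ℕ), by have := j.isLt; have := i.isLt; omega⟩
    else if _h' : (j : ℕ) = (i : ℕ) then
      G (fun l => c ⟨(i : ℕ) + (l : ℕ), by have := i.isLt; have := l.isLt; omega⟩)
    else
      c ⟨(j : ℕ) + q - 1, by have := j.isLt; have := i.isLt; omega⟩

lemma braceIns_eq {A M : Type*} [Ring A] (p q : ℕ) (f : (Fin p → A) → M) (i : Fin p)
    (G : (Fin q → A) → A) (c : Fin (p + q - 1) → A) :
    braceIns p q f i G c = f (insTuple p q i G c) := rfl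

lemma insTuple_update_lt {A : Type*} [Ring A] (p q : ℕ) (i : Fin p) (G : (Fin q → A) → A)
    (c : Fin (p + q - 1) → A) (m : Fin (p + q - 1)) (x : A) (h : (m : ℕ) < (i : ℕ)) :
    insTuple p q i G (Function.update c m x)
      = Function.update (insTuple p q i G c) ⟨(m : ℕ), by have := i.isLt; omega⟩ x := by
  funext j
  simp only [insTuple, Function.update_apply, Fin.ext_iff]
  by_cases h1 : (j : ℕ) < (i : ℕ)
  · rw [dif_pos h1, dif_pos h1]
  · rw [dif_neg h1, dif_neg h1]
    by_cases h2 : (j : ℕ) = (i : ℕ)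
    · rw [dif_pos h2, dif_pos h2, if_neg (by omega)]
      congr 1
      funext l
      rw [if_neg (by omega)]
    · rw [dif_neg h2, dif_neg h2, if_neg (by omega), if_neg (by omega)]

lemma insTuple_update_mid {A : Type*} [Ring A] (p q : ℕ) (i : Fin p) (G : (Fin q → A) → A)
    (c : Fin (p + q - 1) → A) (m : Fin (p + q - 1)) (x : A)
    (h1 : (i : ℕ) ≤ (m : ℕ)) (h2 : (m : ℕ) < (i : ℕ) + q) :
    insTuple p q i G (Function.update c m x)
      = Function.update (insTuple p q i G c) i
          (G (Function.update
              (fun l : Fin q => c ⟨(i : ℕ) + (l : ℕ), by have := i.isLt; have := l.isLt; omega⟩)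
              ⟨(m : ℕ) - (i : ℕ), by omega⟩ x)) := by
  funext j
  simp only [insTuple, Function.update_apply]
  by_cases hj1 : (j : ℕ) < (i : ℕ)
  · rw [dif_pos hj1, dif_pos hj1, if_neg (by simp only [Fin.ext_iff]; omega),
      if_neg (by simp only [Fin.ext_iff]; omega)]
  · rw [dif_neg hj1, dif_neg hj1]
    by_cases hj2 : (j : ℕ) = (i : ℕ)
    · rw [dif_pos hj2, dif_pos hj2, if_pos (by simp only [Fin.ext_iff]; omega)]
      congr 1
      funext l
      simp only [Function.update_apply, Fin.ext_iff]
      by_cases hl : (i : ℕ) + (l : ℕ) = (m : ℕ)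
      · rw [if_pos hl, if_pos (by omega)]
      · rw [if_neg hl, if_neg (by omega)]
    · rw [dif_neg hj2, dif_neg hj2, if_neg (by simp only [Fin.ext_iff]; omega),
        if_neg (by simp only [Fin.ext_iff]; omega)]

lemma insTuple_update_ge {A : Type*} [Ring A] (p q : ℕ) (i : Fin p) (G : (Fin q → A) → A)
    (c : Fin (p + q - 1) → A) (m : Fin (p + q - 1)) (x : A)
    (h : (i : ℕ) + q ≤ (m : ℕ)) :
    insTuple p q i G (Function.update c m x)
      = Function.update (insTuple p q i G c)
          ⟨(m : ℕ) + 1 - q, by have := m.isLt; have := i.isLt; omega⟩ x := by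
  funext j
  simp only [insTuple, Function.update_apply]
  by_cases hj1 : (j : ℕ) < (i : ℕ)
  · rw [dif_pos hj1, dif_pos hj1, if_neg (by simp only [Fin.ext_iff]; omega),
      if_neg (by simp only [Fin.ext_iff]; omega)]
  · rw [dif_neg hj1, dif_neg hj1]
    by_cases hj2 : (j : ℕ) = (i : ℕ)
    · rw [dif_pos hj2, dif_pos hj2, if_neg (by simp only [Fin.ext_iff]; omega)]
      congr 1
      funext l
      rw [if_neg (by simp only [Fin.ext_iff]; have := l.isLt; omega)]
    · rw [dif_neg hj2, dif_neg hj2]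
      by_cases hj3 : (j : ℕ) + q - 1 = (m : ℕ)
      · rw [if_pos (by simp only [Fin.ext_iff]; omega), if_pos (by simp only [Fin.ext_iff]; omega)]
      · rw [if_neg (by simp only [Fin.ext_iff]; omega), if_neg (by simp only [Fin.ext_iff]; omega)]

/-- The insertion `f ∘ᵢ G` as a multilinear map. -/
def braceML (p q : ℕ) {M : Type*} [AddCommMonoid M] [Module k M]
    (f : MultilinearMap k (fun _ : Fin p => A) M) (i : Fin p)
    (G : MultilinearMap k (fun _ : Fin q => A) A) :
    MultilinearMap k (fun _ : Fin (p + q - 1) => A) M where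
  toFun := braceIns p q ⇑f i ⇑G
  map_update_add' := by
    intro dec c m x y
    obtain rfl : dec = instDecidableEqFin _ := Subsingleton.elim _ _
    simp only [braceIns_eq]
    rcases Nat.lt_or_ge (m : ℕ) (i : ℕ) with h | h
    · rw [insTuple_update_lt _ _ _ _ _ _ _ h, insTuple_update_lt _ _ _ _ _ _ _ h,
        insTuple_update_lt _ _ _ _ _ _ _ h, f.map_update_add]
    rcases Nat.lt_or_ge (m : ℕ) ((i : ℕ) + q) with h2 | h2
    · rw [insTuple_update_mid _ _ _ _ _ _ _ h h2, insTuple_update_mid _ _ _ _ _ _ _ h h2,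
        insTuple_update_mid _ _ _ _ _ _ _ h h2, G.map_update_add, f.map_update_add]
    · rw [insTuple_update_ge _ _ _ _ _ _ _ h2, insTuple_update_ge _ _ _ _ _ _ _ h2,
        insTuple_update_ge _ _ _ _ _ _ _ h2, f.map_update_add]
  map_update_smul' := by
    intro dec c m r x
    obtain rfl : dec = instDecidableEqFin _ := Subsingleton.elim _ _
    simp only [braceIns_eq]
    rcases Nat.lt_or_ge (m : ℕ) (i : ℕ) with h | h
    · rw [insTuple_update_lt _ _ _ _ _ _ _ h, insTuple_update_lt _ _ _ _ _ _ _ h,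
        f.map_update_smul]
    rcases Nat.lt_or_ge (m : ℕ) ((i : ℕ) + q) with h2 | h2
    · rw [insTuple_update_mid _ _ _ _ _ _ _ h h2, insTuple_update_mid _ _ _ _ _ _ _ h h2,
        G.map_update_smul, f.map_update_smul]
    · rw [insTuple_update_ge _ _ _ _ _ _ _ h2, insTuple_update_ge _ _ _ _ _ _ _ h2,
        f.map_update_smul]

lemma braceML_apply (p q : ℕ) {M : Type*} [AddCommMonoid M] [Module k M]
    (f : MultilinearMap k (fun _ : Fin p => A) M) (i : Fin p)
    (G : MultilinearMap k (fun _ : Fin q => A) A) (c : Fin (p + q - 1) → A) :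
    braceML p q f i G c = f (insTuple p q i G c) := rfl

/-- The "peeling" linear map implicit in the recursive definition of `hatAux`. -/
def hatPeelA (p : ℕ) (f : MultilinearMap k (fun _ : Fin (p + 1) => A) k) :
    (A ⊗[k] A) →ₗ[k] MultilinearMap k (fun _ : Fin p => A) A :=
  TensorProduct.lift (LinearMap.mk₂ k
    (fun x y => x • (hatAux p (f.curryLeft y)))
    (fun x₁ x₂ y => add_smul x₁ x₂ _)
    (fun c x y => MultilinearMap.ext fun m => by simp [smul_mul_assoc])
    (fun x y₁ y₂ => MultilinearMap.ext fun m => by simp [map_add, mul_add])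
    (fun c x y => MultilinearMap.ext fun m => by simp [map_smul, mul_smul_comm]))

lemma hat_succ (p : ℕ) (f : MultilinearMap k (fun _ : Fin (p + 1) => A) k)
    (a : Fin (p + 1) → A) :
    hatAux (p + 1) f a = hatPeelA p f (Coalgebra.comul (R := k) (a 0)) (Fin.tail a) := rfl

lemma hatPeelA_tmul (p : ℕ) (f : MultilinearMap k (fun _ : Fin (p + 1) => A) k)
    (x y : A) (r : Fin p → A) :
    hatPeelA p f (x ⊗ₜ[k] y) r = x * hatAux p (f.curryLeft y) r := rfl

lemma hatAux_succ_curryLeft (p : ℕ) (g : MultilinearMap k (fun _ : Fin (p + 1) => A) k)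
    (s : A) :
    (hatAux (p + 1) g).curryLeft s = hatPeelA p g (Coalgebra.comul (R := k) s) := by
  rw [show hatAux (p + 1) g
      = LinearMap.uncurryLeft ((hatPeelA p g).comp (Coalgebra.comul (R := k))) from rfl,
    LinearMap.curry_uncurryLeft]
  rfl

set_option maxHeartbeats 1600000 in
/-- The analogue of `hatAux` with values in `A ⊗ A`; in Sweedler notation
`(hatAux2 q g) (b) = b₍₁₎ ⊗ (b₍₂₎ • g(b₍₃₎))`. -/
def hatAux2 : ∀ q : ℕ,
    MultilinearMap k (fun _ : Fin q => A) k →ₗ[k]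
      MultilinearMap k (fun _ : Fin q => A) (A ⊗[k] A)
  | 0 =>
    { toFun := fun f =>
        MultilinearMap.constOfIsEmpty k _ (algebraMap k (A ⊗[k] A) (f Fin.elim0))
      map_add' := fun f g => by
        ext a
        simp [MultilinearMap.constOfIsEmpty, Algebra.TensorProduct.algebraMap_apply,
          TensorProduct.add_tmul]
      map_smul' := fun c f => by
        ext a
        simp [MultilinearMap.constOfIsEmpty, Algebra.smul_def] }
  | (q + 1) =>
    { toFun := fun f =>
        LinearMap.uncurryLeft
          ((TensorProduct.lift (LinearMap.mk₂ k
              (fun x y => Coalgebra.comul (R := k) x • (hatAux2 q (f.curryLeft y)))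
              (fun x₁ x₂ y => by rw [map_add, add_smul])
              (fun c x y => MultilinearMap.ext fun m => by
                simp [smul_mul_assoc])
              (fun x y₁ y₂ => MultilinearMap.ext fun m => by
                simp [map_add, mul_add])
              (fun c x y => MultilinearMap.ext fun m => by
                simp [map_smul, mul_smul_comm]))).comp
            (Coalgebra.comul (R := k)))
      map_add' := fun f g => by
        ext a
        simp only [LinearMap.uncurryLeft_apply, LinearMap.comp_apply,
          MultilinearMap.add_apply]
        generalize Coalgebra.comul (R := k) (a 0) = t
        induction t using TensorProduct.induction_on with
        | zero => simp
        | tmul x y =>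
          simp [show (f + g).curryLeft = f.curryLeft + g.curryLeft from rfl,
            smul_add, mul_add]
        | add s t hs ht =>
          simp only [map_add, MultilinearMap.add_apply] at hs ht ⊢
          rw [hs, ht]; abel
      map_smul' := fun c f => by
        ext a
        simp only [LinearMap.uncurryLeft_apply, LinearMap.comp_apply,
          RingHom.id_apply, MultilinearMap.smul_apply]
        generalize Coalgebra.comul (R := k) (a 0) = t
        induction t using TensorProduct.induction_on with
        | zero => simp
        | tmul x y =>
          simp [show (c • f).curryLeft = c • f.curryLeft from rfl,
            mul_smul_comm]
        | add s t hs ht =>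
          simp only [map_add, MultilinearMap.add_apply, smul_add] at hs ht ⊢
          rw [hs, ht] }

/-- The "peeling" linear map implicit in the recursive definition of `hatAux2`. -/
def hatPeel2 (q : ℕ) (g : MultilinearMap k (fun _ : Fin (q + 1) => A) k) :
    (A ⊗[k] A) →ₗ[k] MultilinearMap k (fun _ : Fin q => A) (A ⊗[k] A) :=
  TensorProduct.lift (LinearMap.mk₂ k
    (fun x y => Coalgebra.comul (R := k) x • (hatAux2 q (g.curryLeft y)))
    (fun x₁ x₂ y => by rw [map_add, add_smul])
    (fun c x y => MultilinearMap.ext fun m => by simp [smul_mul_assoc])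
    (fun x y₁ y₂ => MultilinearMap.ext fun m => by simp [map_add, mul_add])
    (fun c x y => MultilinearMap.ext fun m => by simp [map_smul, mul_smul_comm]))

lemma hatAux2_succ (q : ℕ) (g : MultilinearMap k (fun _ : Fin (q + 1) => A) k)
    (b : Fin (q + 1) → A) :
    hatAux2 (q + 1) g b = hatPeel2 q g (Coalgebra.comul (R := k) (b 0)) (Fin.tail b) := rfl

lemma hatPeel2_tmul (q : ℕ) (g : MultilinearMap k (fun _ : Fin (q + 1) => A) k)
    (x y : A) (b : Fin q → A) :
    hatPeel2 q g (x ⊗ₜ[k] y) b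
      = Coalgebra.comul (R := k) x * hatAux2 q (g.curryLeft y) b := rfl

/-- Sweedler: `Δ(ĝ(b)) = b₍₁₎ ⊗ ĝ(b₍₂₎)`, in the `hatAux2` formulation. -/
lemma comul_hatAux : ∀ (q : ℕ) (g : MultilinearMap k (fun _ : Fin q => A) k)
    (b : Fin q → A),
    Coalgebra.comul (R := k) (hatAux q g b) = hatAux2 q g b := by
  intro q
  induction q with
  | zero =>
    intro g b
    show Coalgebra.comul (R := k) (algebraMap k A (g Fin.elim0))
        = algebraMap k (A ⊗[k] A) (g Fin.elim0)
    rw [Bialgebra.comul_algebraMap]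
  | succ q ih =>
    intro g b
    rw [hat_succ, hatAux2_succ]
    generalize Coalgebra.comul (R := k) (b 0) = t
    induction t using TensorProduct.induction_on with
    | zero => simp
    | tmul x y =>
      rw [hatPeelA_tmul, hatPeel2_tmul, Bialgebra.comul_mul, ih]
    | add s t hs ht =>
      rw [map_add, MultilinearMap.add_apply, map_add, hs, ht, map_add,
        MultilinearMap.add_apply]

/-- Twist of a multilinear map: premultiply the 0-th slot by `w`. -/
def twist {M : Type*} [AddCommMonoid M] [Module k M] {p : ℕ}
    (f : MultilinearMap k (fun _ : Fin (p + 1) => A) M) (w : A) :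
    MultilinearMap k (fun _ : Fin (p + 1) => A) M :=
  LinearMap.uncurryLeft (f.curryLeft ∘ₗ LinearMap.mulLeft k w)

lemma twist_curryLeft {M : Type*} [AddCommMonoid M] [Module k M] {p : ℕ}
    (f : MultilinearMap k (fun _ : Fin (p + 1) => A) M) (w v : A) :
    (twist f w).curryLeft v = f.curryLeft (w * v) := by
  rw [twist, LinearMap.curry_uncurryLeft]; rfl

lemma twist_apply {M : Type*} [AddCommMonoid M] [Module k M] {p : ℕ}
    (f : MultilinearMap k (fun _ : Fin (p + 1) => A) M) (w : A) (a : Fin (p + 1) → A) :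
    twist f w a = f (Fin.cons (w * a 0) (Fin.tail a)) := by
  simp [twist, LinearMap.uncurryLeft_apply, MultilinearMap.curryLeft_apply]

/-- Concatenation of a `q`-tuple and a `p`-tuple into a `(p+q)`-tuple. -/
def catBR (q p : ℕ) {A : Type*} (b : Fin q → A) (r : Fin p → A) : Fin (p + q) → A :=
  fun m => if h : (m : ℕ) < q then b ⟨(m : ℕ), h⟩
    else r ⟨(m : ℕ) - q, by have := m.isLt; omega⟩

lemma catBR_zero (q p : ℕ) {A : Type*} (b : Fin (q + 1) → A) (r : Fin p → A) :
    catBR (q + 1) p b r (0 : Fin ((p + q) + 1)) = b 0 := by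
  simp only [catBR, Fin.val_zero]
  simp only [Nat.succ_pos q, ↓reduceDIte]
  congr 1

lemma catBR_tail (q p : ℕ) {A : Type*} (b : Fin (q + 1) → A) (r : Fin p → A) :
    Fin.tail (catBR (q + 1) p b r) = catBR q p (Fin.tail b) r := by
  funext m
  simp only [Fin.tail, catBR, Fin.val_succ]
  by_cases h : (m : ℕ) < q
  · rw [dif_pos (by omega), dif_pos h]
    rfl
  · rw [dif_neg (by omega), dif_neg h]
    congr 1
    exact Fin.ext (show (m : ℕ) + 1 - (q + 1) = (m : ℕ) - q by omega)

lemma hatAux_cast {m n : ℕ} (h : m = n) (F : MultilinearMap k (fun _ : Fin m => A) k)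
    (c : Fin n → A) :
    hatAux n (F.domDomCongr (finCongr h)) c = hatAux m F (fun i => c (finCongr h i)) := by
  subst h
  have h1 : F.domDomCongr (finCongr rfl) = F := by
    ext v; simp [MultilinearMap.domDomCongr_apply]
  have h2 : (fun i => c (finCongr rfl i)) = c := by funext i; simp
  rw [h1, h2]

lemma insTuple_zero {A : Type*} [Ring A] (p q : ℕ) (G : (Fin q → A) → A)
    (c : Fin ((p + 1) + q - 1) → A) :
    insTuple (p + 1) q 0 G c
      = Fin.cons (G (fun l => c ⟨(l : ℕ), by have := l.isLt; omega⟩))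
          (fun j : Fin p => c ⟨q + (j : ℕ), by have := j.isLt; omega⟩) := by
  funext j
  rcases Fin.eq_zero_or_eq_succ j with rfl | ⟨j', rfl⟩
  · rw [Fin.cons_zero]
    simp only [insTuple, Fin.val_zero]
    simp only [lt_irrefl, ↓reduceDIte]
    congr 1
    funext l
    congr 1
    exact Fin.ext (by simp)
  · rw [Fin.cons_succ]
    simp only [insTuple, Fin.val_succ, Fin.val_zero]
    simp only [Nat.not_lt_zero, Nat.add_one_ne_zero, ↓reduceDIte]
    congr 1
    exact Fin.ext (by simp; omega)

lemma insTuple_succ {A : Type*} [Ring A] (p q : ℕ) (j : Fin p) (G : (Fin q → A) → A)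
    (c : Fin ((p + 1) + q - 1) → A) :
    insTuple (p + 1) q j.succ G c
      = Fin.cons (c ⟨0, by have := j.isLt; omega⟩)
          (insTuple p q j G
            (fun m : Fin (p + q - 1) => c ⟨(m : ℕ) + 1, by have := m.isLt; omega⟩)) := by
  funext j'
  rcases Fin.eq_zero_or_eq_succ j' with rfl | ⟨j'', rfl⟩
  · rw [Fin.cons_zero]
    simp only [insTuple, Fin.val_zero, Fin.val_succ]
    simp only [Nat.zero_lt_succ, ↓reduceDIte]
  · rw [Fin.cons_succ]
    simp only [insTuple, Fin.val_succ]
    by_cases h1 : (j'' : ℕ) < (j : ℕ)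
    · rw [dif_pos (by omega), dif_pos h1]
    · rw [dif_neg (by omega), dif_neg h1]
      by_cases h2 : (j'' : ℕ) = (j : ℕ)
      · rw [dif_pos (by omega), dif_pos h2]
        congr 1
        funext l
        congr 1
        exact Fin.ext (by simp; omega)
      · rw [dif_neg (by omega), dif_neg h2]
        congr 1
        exact Fin.ext (by simp; have := j''.isLt; omega)

/-- Insertion into the 0-th slot, with the natural arity `p + q`. -/
def brace0 (p q : ℕ) {M : Type*} [AddCommMonoid M] [Module k M]
    (f : MultilinearMap k (fun _ : Fin (p + 1) => A) M)
    (G : MultilinearMap k (fun _ : Fin q => A) A) :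
    MultilinearMap k (fun _ : Fin (p + q) => A) M :=
  (braceML (p + 1) q f 0 G).domDomCongr (finCongr (by omega : (p + 1) + q - 1 = p + q))

lemma brace0_apply (p q : ℕ) {M : Type*} [AddCommMonoid M] [Module k M]
    (f : MultilinearMap k (fun _ : Fin (p + 1) => A) M)
    (G : MultilinearMap k (fun _ : Fin q => A) A) (c : Fin (p + q) → A) :
    brace0 p q f G c
      = f (Fin.cons (G (fun l => c ⟨(l : ℕ), by have := l.isLt; omega⟩))
          (fun j : Fin p => c ⟨q + (j : ℕ), by have := j.isLt; omega⟩)) := by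
  rw [brace0, MultilinearMap.domDomCongr_apply, braceML_apply, insTuple_zero]
  congr 2

lemma consMkZero {n : ℕ} {α : Sort*} (x : α) (v : Fin n → α) (h : 0 < n + 1) :
    (Fin.cons x v : Fin (n + 1) → α) ⟨0, h⟩ = x := by
  rw [show (⟨0, h⟩ : Fin (n + 1)) = 0 from Fin.ext (by simp), Fin.cons_zero]

lemma consMkSucc {n : ℕ} {α : Sort*} (x : α) (v : Fin n → α) (i : ℕ) (h : i + 1 < n + 1) :
    (Fin.cons x v : Fin (n + 1) → α) ⟨i + 1, h⟩ = v ⟨i, by omega⟩ :=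
  @Fin.cons_succ n (fun _ => α) x v ⟨i, by omega⟩

lemma consMk {n : ℕ} {α : Sort*} (x : α) (v : Fin n → α) (i : ℕ) (h : i < n + 1) :
    (Fin.cons x v : Fin (n + 1) → α) ⟨i, h⟩
      = if _hi : i = 0 then x else v ⟨i - 1, by omega⟩ := by
  rcases i with _ | i'
  · rw [dif_pos rfl]
    exact consMkZero x v h
  · rw [dif_neg (Nat.succ_ne_zero i')]
    exact consMkSucc x v i' h

lemma brace0_curryLeft (p q : ℕ) {M : Type*} [AddCommMonoid M] [Module k M]
    (f : MultilinearMap k (fun _ : Fin (p + 1) => A) M)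
    (G : MultilinearMap k (fun _ : Fin (q + 1) => A) A) (s : A) :
    (brace0 p (q + 1) f G).curryLeft s = brace0 p q f (G.curryLeft s) := by
  ext c
  rw [MultilinearMap.curryLeft_apply]
  refine (brace0_apply p (q + 1) f G (Fin.cons s c)).trans
    (Eq.trans ?_ (brace0_apply p q f (G.curryLeft s) c).symm)
  refine MultilinearMap.congr_arg f ?_
  funext j
  rcases Fin.eq_zero_or_eq_succ j with rfl | ⟨j', rfl⟩
  · rw [Fin.cons_zero, Fin.cons_zero, MultilinearMap.curryLeft_apply]
    refine MultilinearMap.congr_arg G ?_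
    funext l
    rw [consMk]
    rcases Fin.eq_zero_or_eq_succ l with rfl | ⟨l', rfl⟩
    · rw [dif_pos (by simp), Fin.cons_zero]
    · rw [dif_neg (by simp), Fin.cons_succ]
      exact congrArg c (Fin.ext (by simp))
  · rw [Fin.cons_succ, Fin.cons_succ, consMk, dif_neg (by omega)]
    congr 1
    simp only [Fin.mk.injEq]
    omega

lemma brace0_Gadd (p q : ℕ) {M : Type*} [AddCommMonoid M] [Module k M]
    (f : MultilinearMap k (fun _ : Fin (p + 1) => A) M)
    (G G' : MultilinearMap k (fun _ : Fin q => A) A) :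
    brace0 p q f (G + G') = brace0 p q f G + brace0 p q f G' := by
  ext c
  simp only [brace0_apply, MultilinearMap.add_apply]
  rw [MultilinearMap.cons_add]

lemma brace0_Gsmul (p q : ℕ) {M : Type*} [AddCommMonoid M] [Module k M]
    (f : MultilinearMap k (fun _ : Fin (p + 1) => A) M) (c : k)
    (G : MultilinearMap k (fun _ : Fin q => A) A) :
    brace0 p q f (c • G) = c • brace0 p q f G := by
  ext m
  simp only [brace0_apply, MultilinearMap.smul_apply]
  rw [MultilinearMap.cons_smul]

lemma brace0_Gzero (p q : ℕ) {M : Type*} [AddCommMonoid M] [Module k M]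
    (f : MultilinearMap k (fun _ : Fin (p + 1) => A) M) :
    brace0 p q f (0 : MultilinearMap k (fun _ : Fin q => A) A) = 0 := by
  ext c
  simp only [brace0_apply, MultilinearMap.zero_apply]
  exact f.map_coord_zero 0 (by rw [Fin.cons_zero])

lemma brace0_twist (p q : ℕ) {M : Type*} [AddCommMonoid M] [Module k M]
    (f : MultilinearMap k (fun _ : Fin (p + 1) => A) M) (w : A)
    (G : MultilinearMap k (fun _ : Fin q => A) A) :
    brace0 p q (twist f w) G = brace0 p q f (w • G) := by
  ext c
  rw [brace0_apply, brace0_apply, twist_apply]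
  simp only [Fin.cons_zero, Fin.tail_cons, MultilinearMap.smul_apply, smul_eq_mul]

lemma smul_comm_ML {q : ℕ} (w : A) (c : k)
    (H : MultilinearMap k (fun _ : Fin q => A) A) : w • c • H = c • w • H := by
  ext m
  simp only [MultilinearMap.smul_apply]
  exact (smul_comm c w (H m)).symm

lemma smul_assoc_ML {q : ℕ} (c : k) (w : A)
    (H : MultilinearMap k (fun _ : Fin q => A) A) : (c • w) • H = c • w • H := by
  ext m
  simp only [MultilinearMap.smul_apply]
  rw [smul_assoc]

/-- Auxiliary bilinear gadget for the key computation. -/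
def innerMap (p q : ℕ) (f : MultilinearMap k (fun _ : Fin (p + 1) => A) k)
    (g : MultilinearMap k (fun _ : Fin (q + 1) => A) k) (cb : Fin (p + q) → A) :
    (A ⊗[k] A) →ₗ[k] A :=
  TensorProduct.lift (LinearMap.mk₂ k
    (fun w y => hatAux (p + q) (brace0 p q f (w • hatAux q (g.curryLeft y))) cb)
    (fun w₁ w₂ y => by
      rw [add_smul, brace0_Gadd, map_add, MultilinearMap.add_apply])
    (fun c w y => by
      rw [smul_assoc_ML, brace0_Gsmul, map_smul, MultilinearMap.smul_apply])
    (fun w y₁ y₂ => by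
      rw [map_add, map_add, smul_add, brace0_Gadd, map_add, MultilinearMap.add_apply])
    (fun c w y => by
      rw [map_smul, map_smul, smul_comm_ML, brace0_Gsmul, map_smul,
        MultilinearMap.smul_apply]))

lemma innerMap_tmul (p q : ℕ) (f : MultilinearMap k (fun _ : Fin (p + 1) => A) k)
    (g : MultilinearMap k (fun _ : Fin (q + 1) => A) k) (cb : Fin (p + q) → A)
    (w y : A) :
    innerMap p q f g cb (w ⊗ₜ[k] y)
      = hatAux (p + q) (brace0 p q f (w • hatAux q (g.curryLeft y))) cb := rfl

/-- Auxiliary trilinear gadget for the key computation. -/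
def thetaMap (p q : ℕ) (f : MultilinearMap k (fun _ : Fin (p + 1) => A) k)
    (g : MultilinearMap k (fun _ : Fin (q + 1) => A) k) (cb : Fin (p + q) → A) :
    (A ⊗[k] (A ⊗[k] A)) →ₗ[k] A :=
  TensorProduct.lift (LinearMap.mk₂ k
    (fun u E => u • innerMap p q f g cb E)
    (fun u₁ u₂ E => add_smul _ _ _)
    (fun c u E => smul_assoc _ _ _)
    (fun u E₁ E₂ => by rw [map_add, smul_add])
    (fun c u E => by rw [map_smul]; exact (smul_comm _ _ _).symm))

lemma thetaMap_tmul (p q : ℕ) (f : MultilinearMap k (fun _ : Fin (p + 1) => A) k)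
    (g : MultilinearMap k (fun _ : Fin (q + 1) => A) k) (cb : Fin (p + q) → A)
    (u : A) (E : A ⊗[k] A) :
    thetaMap p q f g cb (u ⊗ₜ[k] E) = u • innerMap p q f g cb E := rfl

lemma subM (p : ℕ) (f : MultilinearMap k (fun _ : Fin (p + 1) => A) k)
    (r : Fin p → A) (u w : A) (Z : A ⊗[k] A) :
    hatPeelA p f ((u ⊗ₜ[k] w) * Z) r = u * hatPeelA p (twist f w) Z r := by
  induction Z using TensorProduct.induction_on with
  | zero => simp
  | tmul z v =>
    rw [Algebra.TensorProduct.tmul_mul_tmul, hatPeelA_tmul, hatPeelA_tmul,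
      twist_curryLeft, mul_assoc]
  | add Z₁ Z₂ h₁ h₂ =>
    rw [mul_add, map_add, MultilinearMap.add_apply, h₁, h₂, map_add,
      MultilinearMap.add_apply, mul_add]

lemma brace0_hatPeelA (p q : ℕ) (f : MultilinearMap k (fun _ : Fin (p + 1) => A) k)
    (g : MultilinearMap k (fun _ : Fin (q + 1) => A) k) (cb : Fin (p + q) → A)
    (S : A ⊗[k] A) :
    hatAux (p + q) (brace0 p q f (hatPeelA q g S)) cb = innerMap p q f g cb S := by
  induction S using TensorProduct.induction_on with
  | zero => simp [brace0_Gzero]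
  | tmul w y => rfl
  | add S₁ S₂ h₁ h₂ =>
    rw [map_add, brace0_Gadd, map_add, MultilinearMap.add_apply, h₁, h₂, map_add]

lemma GK0 : ∀ (q : ℕ) (g : MultilinearMap k (fun _ : Fin q => A) k) (p : ℕ)
    (f : MultilinearMap k (fun _ : Fin (p + 1) => A) k) (b : Fin q → A) (r : Fin p → A),
    hatPeelA p f (hatAux2 q g b) r
      = hatAux (p + q) (brace0 p q f (hatAux q g)) (catBR q p b r) := by
  intro q
  induction q with
  | zero =>
    intro g p f b r
    rw [show hatAux2 0 g b = algebraMap k (A ⊗[k] A) (g Fin.elim0) from rfl,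
      Algebra.TensorProduct.algebraMap_apply, hatPeelA_tmul]
    have hc : catBR 0 p b r = r := by
      funext m
      simp only [catBR]
      rw [dif_neg (by omega)]
      exact congrArg r (Fin.ext (by simp))
    have hb : brace0 p 0 f (hatAux 0 g) = (g Fin.elim0) • (f.curryLeft 1) := by
      ext c
      refine (brace0_apply p 0 f (hatAux 0 g) c).trans ?_
      rw [show hatAux 0 g (fun l : Fin 0 => c ⟨(l : ℕ), by have := l.isLt; omega⟩)
            = algebraMap k A (g Fin.elim0) from rfl,
        Algebra.algebraMap_eq_smul_one, MultilinearMap.cons_smul]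
      have h2 : (fun j : Fin p => c ⟨0 + (j : ℕ), by have := j.isLt; omega⟩) = c := by
        funext j
        exact congrArg c (Fin.ext (by simp))
      rw [h2]
      rfl
    have hstep : hatAux (p + 0) (brace0 p 0 f (hatAux 0 g)) (catBR 0 p b r)
        = (g Fin.elim0) • hatAux p (f.curryLeft 1) r := by
      rw [hb, map_smul, MultilinearMap.smul_apply, hc]
      rfl
    rw [hstep, Algebra.smul_def]
  | succ q ih =>
    intro g p f b r
    have hR : ∀ T : A ⊗[k] A,
        hatPeelA (p + q) (brace0 p (q + 1) f (hatAux (q + 1) g)) T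
            (catBR q p (Fin.tail b) r)
          = thetaMap p q f g (catBR q p (Fin.tail b) r)
              ((Coalgebra.comul (R := k)).lTensor A T) := by
      intro T
      induction T using TensorProduct.induction_on with
      | zero => simp
      | tmul u s =>
        rw [LinearMap.lTensor_tmul, hatPeelA_tmul, thetaMap_tmul]
        have h3 : (brace0 p (q + 1) f (hatAux (q + 1) g)).curryLeft s
            = brace0 p q f (hatPeelA q g (Coalgebra.comul (R := k) s)) :=
          (brace0_curryLeft p q f (hatAux (q + 1) g) s).trans
            (congrArg (fun G => brace0 p q f G) (hatAux_succ_curryLeft q g s))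
        refine (congrArg
          (fun Z : MultilinearMap k (fun _ : Fin (p + q) => A) k
            => u * hatAux (p + q) Z (catBR q p (Fin.tail b) r)) h3).trans ?_
        rw [brace0_hatPeelA, smul_eq_mul]
      | add T₁ T₂ h₁ h₂ =>
        rw [map_add, MultilinearMap.add_apply, h₁, h₂, map_add, map_add]
    have hL : ∀ T : A ⊗[k] A,
        hatPeelA p f (hatPeel2 q g T (Fin.tail b)) r
          = thetaMap p q f g (catBR q p (Fin.tail b) r)
              ((TensorProduct.assoc k A A A)
                ((Coalgebra.comul (R := k)).rTensor A T)) := by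
      intro T
      induction T using TensorProduct.induction_on with
      | zero =>
        rw [map_zero, MultilinearMap.zero_apply, map_zero, MultilinearMap.zero_apply,
          map_zero, LinearEquiv.map_zero, map_zero]
      | tmul x y =>
        rw [hatPeel2_tmul, LinearMap.rTensor_tmul]
        generalize Coalgebra.comul (R := k) x = s
        induction s using TensorProduct.induction_on with
        | zero =>
          rw [zero_mul, map_zero, MultilinearMap.zero_apply, TensorProduct.zero_tmul,
            LinearEquiv.map_zero, map_zero]
        | tmul u w =>
          rw [TensorProduct.assoc_tmul, thetaMap_tmul, innerMap_tmul,
            ← brace0_twist, ← ih (g.curryLeft y) p (twist f w) (Fin.tail b) r,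
            subM, smul_eq_mul]
        | add s₁ s₂ h₁ h₂ =>
          rw [add_mul, map_add, MultilinearMap.add_apply, h₁, h₂,
            TensorProduct.add_tmul, map_add, map_add]
      | add T₁ T₂ h₁ h₂ =>
        rw [map_add, MultilinearMap.add_apply, map_add, MultilinearMap.add_apply,
          h₁, h₂, map_add, map_add, map_add]
    calc hatPeelA p f (hatAux2 (q + 1) g b) r
        = hatPeelA p f (hatPeel2 q g (Coalgebra.comul (R := k) (b 0)) (Fin.tail b)) r := by
          rw [hatAux2_succ]
      _ = thetaMap p q f g (catBR q p (Fin.tail b) r)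
            ((TensorProduct.assoc k A A A)
              ((Coalgebra.comul (R := k)).rTensor A (Coalgebra.comul (R := k) (b 0)))) :=
          hL _
      _ = thetaMap p q f g (catBR q p (Fin.tail b) r)
            ((Coalgebra.comul (R := k)).lTensor A (Coalgebra.comul (R := k) (b 0))) := by
          rw [Coalgebra.coassoc_apply]
      _ = hatPeelA (p + q) (brace0 p (q + 1) f (hatAux (q + 1) g))
            (Coalgebra.comul (R := k) (b 0)) (catBR q p (Fin.tail b) r) := (hR _).symm
      _ = hatAux (p + (q + 1)) (brace0 p (q + 1) f (hatAux (q + 1) g))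
            (catBR (q + 1) p b r) := by
          rw [show hatAux (p + (q + 1)) (brace0 p (q + 1) f (hatAux (q + 1) g))
                (catBR (q + 1) p b r)
              = hatPeelA (p + q) (brace0 p (q + 1) f (hatAux (q + 1) g))
                  (Coalgebra.comul (R := k) ((catBR (q + 1) p b r) (0 : Fin ((p + q) + 1))))
                  (Fin.tail (catBR (q + 1) p b r))
            from hat_succ (p + q) _ _, catBR_zero, catBR_tail]

lemma braceML_succ_curry (p q : ℕ) (hq1 : (p + 1) + q - 1 = (p + q - 1) + 1)
    (f : MultilinearMap k (fun _ : Fin (p + 1) => A) k) (j : Fin p)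
    (G : MultilinearMap k (fun _ : Fin q => A) A) (y : A) :
    ((braceML (p + 1) q f j.succ G).domDomCongr (finCongr hq1)).curryLeft y
      = braceML p q (f.curryLeft y) j G := by
  ext c''
  rw [MultilinearMap.curryLeft_apply, MultilinearMap.domDomCongr_apply,
    braceML_apply, braceML_apply, insTuple_succ, MultilinearMap.curryLeft_apply]
  refine MultilinearMap.congr_arg f ?_
  have e1 : (Fin.cons y c'' : Fin ((p + q - 1) + 1) → A) ((finCongr hq1) ⟨0, by omega⟩) = y :=
    consMkZero y c'' (Nat.succ_pos _)
  have e2 : (fun m : Fin (p + q - 1) =>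
      (Fin.cons y c'' : Fin ((p + q - 1) + 1) → A)
        ((finCongr hq1) ⟨(m : ℕ) + 1, by have := m.isLt; omega⟩)) = c'' := by
    funext m
    exact (consMkSucc y c'' (m : ℕ) (by have := m.isLt; omega)).trans
      (congrArg c'' (Fin.ext rfl))
  rw [e1, e2]

lemma key : ∀ (p q : ℕ) (f : MultilinearMap k (fun _ : Fin p => A) k)
    (g : MultilinearMap k (fun _ : Fin q => A) k) (i : Fin p) (c : Fin (p + q - 1) → A),
    hatAux p f (insTuple p q i ⇑(hatAux q g) c)
      = hatAux (p + q - 1) (braceML p q f i (hatAux q g)) c := by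
  intro p
  induction p with
  | zero => intro q f g i c; exact i.elim0
  | succ p ih =>
    intro q f g i c
    rcases Fin.eq_zero_or_eq_succ i with rfl | ⟨j, rfl⟩
    · rw [insTuple_zero, hat_succ, Fin.cons_zero, Fin.tail_cons, comul_hatAux, GK0,
        show brace0 p q f (hatAux q g)
            = (braceML (p + 1) q f 0 (hatAux q g)).domDomCongr
                (finCongr (by omega : (p + 1) + q - 1 = p + q)) from rfl,
        hatAux_cast]
      refine MultilinearMap.congr_arg _ (funext fun i0 => ?_)
      simp only [catBR, finCongr_apply, Fin.coe_cast]
      by_cases h : (i0 : ℕ) < q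
      · rw [dif_pos h]
      · rw [dif_neg h]
        exact congrArg c (Fin.ext (show q + ((i0 : ℕ) - q) = (i0 : ℕ) by omega))
    · have hq1 : (p + 1) + q - 1 = (p + q - 1) + 1 := by have := j.isLt; omega
      rw [insTuple_succ, hat_succ, Fin.cons_zero, Fin.tail_cons]
      have hR : hatAux ((p + 1) + q - 1) (braceML (p + 1) q f j.succ (hatAux q g)) c
          = hatPeelA (p + q - 1)
              ((braceML (p + 1) q f j.succ (hatAux q g)).domDomCongr (finCongr hq1))
              (Coalgebra.comul (R := k) (c ⟨0, by have := j.isLt; omega⟩))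
              (fun m : Fin (p + q - 1) => c ⟨(m : ℕ) + 1, by have := m.isLt; omega⟩) := by
        set c' : Fin ((p + q - 1) + 1) → A :=
          fun m => c ⟨(m : ℕ), by have := m.isLt; omega⟩ with hc'
        have h0 : c' 0 = c ⟨0, by have := j.isLt; omega⟩ :=
          congrArg c (Fin.ext (by simp [hc']))
        have htail : Fin.tail c'
            = (fun m : Fin (p + q - 1) => c ⟨(m : ℕ) + 1, by have := m.isLt; omega⟩) := by
          funext m
          exact congrArg c (Fin.ext (by simp [hc', Fin.val_succ]))
        rw [← h0, ← htail, ← hat_succ, hatAux_cast hq1]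
        exact MultilinearMap.congr_arg _
          (funext fun i0 => (congrArg c (Fin.ext rfl)).symm)
      rw [hR]
      generalize Coalgebra.comul (R := k) (c ⟨0, by have := j.isLt; omega⟩) = t
      induction t using TensorProduct.induction_on with
      | zero => rw [map_zero, MultilinearMap.zero_apply, map_zero, MultilinearMap.zero_apply]
      | tmul x y =>
        rw [hatPeelA_tmul, hatPeelA_tmul, ih q (f.curryLeft y) g j _]
        exact congrArg (fun Z : MultilinearMap k (fun _ : Fin (p + q - 1) => A) k
            => x * hatAux (p + q - 1) Z
              (fun m : Fin (p + q - 1) => c ⟨(m : ℕ) + 1, by have := m.isLt; omega⟩))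
          (braceML_succ_curry p q hq1 f j (hatAux q g) y).symm
      | add t₁ t₂ h₁ h₂ =>
        rw [map_add, MultilinearMap.add_apply, map_add, MultilinearMap.add_apply, h₁, h₂]

lemma hat_coe (p : ℕ) (f : MultilinearMap k (fun _ : Fin p => A) k) :
    hat p ⇑f = ⇑(hatAux p f) := by
  have h : ∃ g : MultilinearMap k (fun _ : Fin p => A) k, ⇑g = ⇑f := ⟨f, rfl⟩
  rw [hat]
  split
  · next h' =>
    have he : h'.choose = f := DFunLike.coe_injective h'.choose_spec
    rw [he]
  · next h' => exact absurd h h'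

end HatProofs


section Statements

variable {k A : Type*} [Field k] [Ring A] [HopfAlgebra k A]

/-- For every `k`-valued `p`-cochain `f` and `q`-cochain `g`,
`f̂ ∘ ĝ = (f ∘ ĝ)^`, where `F ∘ G = Σ_{i=1}^{p} (-1)^{q(i-1)} F ∘ᵢ G`. -/
theorem hat_compose (p q : ℕ)
    (f : MultilinearMap k (fun _ : Fin p => A) k)
    (g : MultilinearMap k (fun _ : Fin q => A) k) :
    composeIns k p q (hat p ⇑f) (hat q ⇑g)
      = hat (p + q - 1) (composeIns k p q ⇑f (hat q ⇑g)) := by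
  rw [hat_coe q g, hat_coe p f]
  have hrhs : composeIns k p q ⇑f ⇑(hatAux q g)
      = ⇑(∑ i : Fin p, (-1 : k) ^ (q * (i : ℕ)) • braceML p q f i (hatAux q g)) := by
    funext c
    rw [composeIns, MultilinearMap.sum_apply]
    refine Finset.sum_congr rfl fun i _ => ?_
    rw [MultilinearMap.smul_apply]
    rfl
  rw [hrhs, hat_coe (p + q - 1) _]
  funext c
  rw [composeIns, map_sum, MultilinearMap.sum_apply]
  refine Finset.sum_congr rfl fun i _ => ?_
  rw [map_smul, MultilinearMap.smul_apply]
  congr 1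
  exact key p q f g i c

end Statements
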